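/- Let g1, g2 > 0, gm = min(g1,g2), gM = max(g1,g2). The function Θ_u^DNC(T, f) = f · (2^(2T/f)/gM + 2^(T/f)·(1/gm − 1/gM) − 1/gm) is convex on the set {(T, f) ∈ ℝ² : f > 0}. -/

import Mathlib

/-- The perspective of `x ↦ exp (b x)` is convex on the upper half-plane. -/
lemma persp_exp (b : ℝ) :
    ConvexOn ℝ {p : ℝ × ℝ | 0 < p.2}
      (fun p : ℝ × ℝ => p.2 * Real.exp (b * p.1 / p.2)) := by
  refine ⟨convex_halfSpace_gt ⟨fun x y => rfl, fun c x => rfl⟩ 0, ?_⟩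
  rintro ⟨x1, y1⟩ h1 ⟨x2, y2⟩ h2 a c ha hc hac
  simp only [Set.mem_setOf_eq] at h1 h2
  have hs0 : 0 < a * y1 + c * y2 := by
    rcases ha.lt_or_eq with h | h
    · nlinarith [mul_nonneg hc h2.le]
    · have hc1 : c = 1 := by linarith
      nlinarith
  set s := a * y1 + c * y2 with hs
  have hns : s ≠ 0 := hs0.ne'
  have hny1 : y1 ≠ 0 := h1.ne'
  have hny2 : y2 ≠ 0 := h2.ne'
  have hw1 : 0 ≤ a * y1 / s := by positivity
  have hw2 : 0 ≤ c * y2 / s := by positivity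
  have hwsum : a * y1 / s + c * y2 / s = 1 := by field_simp; exact hs.symm
  have harg : b * (a * x1 + c * x2) / s
      = (a * y1 / s) * (b * x1 / y1) + (c * y2 / s) * (b * x2 / y2) := by
    field_simp
  have hjen := convexOn_exp.2 (Set.mem_univ (b * x1 / y1)) (Set.mem_univ (b * x2 / y2))
      hw1 hw2 hwsum
  simp only [Prod.smul_mk, Prod.mk_add_mk, smul_eq_mul] at hjen ⊢
  rw [harg]
  calc s * Real.exp ((a * y1 / s) * (b * x1 / y1) + (c * y2 / s) * (b * x2 / y2))
      ≤ s * ((a * y1 / s) * Real.exp (b * x1 / y1) + (c * y2 / s) * Real.exp (b * x2 / y2)) := by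
        exact mul_le_mul_of_nonneg_left hjen hs0.le
    _ = a * (y1 * Real.exp (b * x1 / y1)) + c * (y2 * Real.exp (b * x2 / y2)) := by
        field_simp

/-- The perspective-type transform
`Θ_u^DNC(T, f) = f * (2^(2T/f)/gM + 2^(T/f) * (1/gm - 1/gM) - 1/gm)` of the SPC-DNC uplink
sum-power function is convex on the half-plane `{(T, f) : f > 0}`, where
`gm = min g1 g2` and `gM = max g1 g2`. -/
theorem stmt_10 (g1 g2 : ℝ) (hg1 : 0 < g1) (hg2 : 0 < g2) :
    ConvexOn ℝ {p : ℝ × ℝ | 0 < p.2}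
      (fun p : ℝ × ℝ =>
        p.2 * ((2 : ℝ) ^ (2 * p.1 / p.2) / max g1 g2
          + (2 : ℝ) ^ (p.1 / p.2) * (1 / min g1 g2 - 1 / max g1 g2) - 1 / min g1 g2)) := by
  set gm := min g1 g2 with hgm
  set gM := max g1 g2 with hgM
  have hgm0 : 0 < gm := lt_min hg1 hg2
  have hgM0 : 0 < gM := lt_max_of_lt_left hg1
  have hle : gm ≤ gM := min_le_max
  have hc : 0 ≤ 1 / gm - 1 / gM := by
    rw [sub_nonneg]
    exact one_div_le_one_div_of_le hgm0 hle
  have heq : (fun p : ℝ × ℝ =>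
        p.2 * ((2 : ℝ) ^ (2 * p.1 / p.2) / gM
          + (2 : ℝ) ^ (p.1 / p.2) * (1 / gm - 1 / gM) - 1 / gm))
      = fun p : ℝ × ℝ =>
        (1 / gM) * (p.2 * Real.exp ((2 * Real.log 2) * p.1 / p.2))
        + (1 / gm - 1 / gM) * (p.2 * Real.exp (Real.log 2 * p.1 / p.2))
        + (-(1 / gm)) * p.2 := by
    funext p
    rw [Real.rpow_def_of_pos two_pos, Real.rpow_def_of_pos two_pos]
    have h1 : Real.log 2 * (2 * p.1 / p.2) = (2 * Real.log 2) * p.1 / p.2 := by ring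
    have h2 : Real.log 2 * (p.1 / p.2) = Real.log 2 * p.1 / p.2 := by ring
    rw [h1, h2]
    ring
  rw [heq]
  have hlin : ConvexOn ℝ {p : ℝ × ℝ | 0 < p.2} (fun p : ℝ × ℝ => (-(1 / gm)) * p.2) := by
    refine ⟨convex_halfSpace_gt ⟨fun x y => rfl, fun c x => rfl⟩ 0, ?_⟩
    rintro ⟨x1, y1⟩ _ ⟨x2, y2⟩ _ a c _ _ _
    simp only [Prod.smul_mk, Prod.mk_add_mk, smul_eq_mul]
    apply le_of_eq
    ring
  have h1' : ConvexOn ℝ {p : ℝ × ℝ | 0 < p.2}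
      (fun p : ℝ × ℝ => (1 / gM) * (p.2 * Real.exp ((2 * Real.log 2) * p.1 / p.2))) := by
    have := (persp_exp (2 * Real.log 2)).smul (c := 1 / gM) (by positivity)
    simpa [smul_eq_mul] using this
  have h2' : ConvexOn ℝ {p : ℝ × ℝ | 0 < p.2}
      (fun p : ℝ × ℝ => (1 / gm - 1 / gM) * (p.2 * Real.exp (Real.log 2 * p.1 / p.2))) := by
    have := (persp_exp (Real.log 2)).smul (c := 1 / gm - 1 / gM) hc
    simpa [smul_eq_mul] using this
  exact (h1'.add h2').add hlin
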